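/- Fix p ∈ (0,1], λ > 0 and h < 1 with Φ_p(λ,h) = λh (delocalization). Then for all δ, ε ≥ 0 with ε ≥ δ(1 − h)/λ one also has Φ_p(λ + δ, h + ε) = (λ + δ)(h + ε), i.e. (λ + δ, h + ε) is delocalized. -/

import Mathlib

/- A heteropolymer in a medium with random droplets (Wüthrich, Ann. Appl. Probab. 2006).

A path in `C^{k+m}_{k,x}` is encoded by its sequence of `m` increments: at each step every
one of the `d` coordinates changes by `±1`, so an increment is an element of `Fin d → Bool`
(`true` = `+1`, `false` = `-1`).  The uniform measure on paths corresponds to the uniform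
measure on step sequences, so expectations under `P^{k+m}_{k,x}` are normalized sums over
all step sequences. -/

open MeasureTheory Filter Real

namespace Hetero

variable (d : ℕ)

/-- Step sequences of length `m`. -/
abbrev Steps (m : ℕ) := Fin m → Fin d → Bool

/-- Position (in `ℤ^d`) after `j` steps of the walk started at `x`. -/
def pos (x : Fin d → ℤ) {m : ℕ} (s : Steps d m) (j : ℕ) : Fin d → ℤ :=
  fun c => x c + ∑ i ∈ Finset.range j,
    (if hi : i < m then (if s ⟨i, hi⟩ c then 1 else -1) else 0)

/-- `Δ_η(S_i)`: `-1` if the walk is at the origin (of `ℤ^d`) and there is a droplet there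
(`η_i = 1`), and `+1` otherwise. -/
noncomputable def del (et : ℤ → ℝ) (t : ℤ) (y : Fin d → ℤ) : ℝ :=
  if y = 0 ∧ et t = 1 then -1 else 1

/-- Energy `λ ∑_{i=k+1}^{k+m} Δ_η(S_i)(ω_i + h)` of the polymer started at time `k`
at site `x`, performing the `m` steps `s`. -/
noncomputable def ham (lam h : ℝ) (om et : ℤ → ℝ) (k : ℤ) (x : Fin d → ℤ) {m : ℕ}
    (s : Steps d m) : ℝ :=
  lam * ∑ j ∈ Finset.Icc 1 m, del d et (k + (j : ℤ)) (pos d x s j) * (om (k + (j : ℤ)) + h)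

/-- Partition sum `Z^{k+m}_{k,x}(ω,η)`. -/
noncomputable def Z (lam h : ℝ) (om et : ℤ → ℝ) (k : ℤ) (x : Fin d → ℤ) (m : ℕ) : ℝ :=
  (∑ s : Steps d m, Real.exp (ham d lam h om et k x s)) / 2 ^ (d * m)

/-- Restricted partition sum `Ẑ^{k+m}_{k,x}(ω,η)` (only paths ending at the origin). -/
noncomputable def Zhat (lam h : ℝ) (om et : ℤ → ℝ) (k : ℤ) (x : Fin d → ℤ) (m : ℕ) : ℝ :=
  (∑ s : Steps d m, Set.indicator {s : Steps d m | pos d x s m = 0}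
      (fun s => Real.exp (ham d lam h om et k x s)) s) / 2 ^ (d * m)

/-- `Ψ^{k+m}_{k,x}(ω,η) = E^{k+m}_{k,x}[exp{λ ∑ (Δ_η(S_i) - 1)(ω_i + h)}]`. -/
noncomputable def Psi (lam h : ℝ) (om et : ℤ → ℝ) (k : ℤ) (x : Fin d → ℤ) (m : ℕ) : ℝ :=
  (∑ s : Steps d m, Real.exp (lam * ∑ j ∈ Finset.Icc 1 m,
      (del d et (k + (j : ℤ)) (pos d x s j) - 1) * (om (k + (j : ℤ)) + h))) / 2 ^ (d * m)

/-- Quenched polymer probability `Q^{k+m}_{k,x}[A](ω,η)` of a path event `A`. -/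
noncomputable def Qprob (lam h : ℝ) (om et : ℤ → ℝ) (k : ℤ) (x : Fin d → ℤ) (m : ℕ)
    (A : Set (Steps d m)) : ℝ :=
  (∑ s : Steps d m, Set.indicator A (fun s => Real.exp (ham d lam h om et k x s)) s) /
    (∑ s : Steps d m, Real.exp (ham d lam h om et k x s))

/-- Simple-random-walk probability `P^{k+m}_{k,x}[A]` of a path event `A` (it does not
depend on `k` and `x`, which only shift the path). -/
noncomputable def Pprob (m : ℕ) (A : Set (Steps d m)) : ℝ :=
  (∑ s : Steps d m, Set.indicator A (fun _ => (1 : ℝ)) s) / 2 ^ (d * m)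

/-- Probability that the `m`-step walk started at the origin does not revisit the origin. -/
noncomputable def noReturn (m : ℕ) : ℝ :=
  Pprob d m {s : Steps d m | ∀ i, 1 ≤ i → i ≤ m → pos d 0 s i ≠ 0}

/-- `α(d) = P^∞_{0,0}[w(i) ≠ 0 for all i ≥ 1]`: the probability that the walk never
returns to the origin.  By continuity from above it is the (decreasing) limit, i.e. the
infimum, of the finite-horizon no-return probabilities. -/
noncomputable def alpha : ℝ := ⨅ m : ℕ, noReturn d m

/-- `N_m`: number of returns of the walk (started at the origin) to the origin in `(0, m]`. -/
def Nret (m : ℕ) (s : Steps d m) : ℕ :=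
  ((Finset.Icc 1 m).filter (fun i => pos d 0 s i = 0)).card

/-- Euclidean norm of a point of `ℤ^d`. -/
noncomputable def nrm (x : Fin d → ℤ) : ℝ := Real.sqrt (∑ c, ((x c : ℝ)) ^ 2)

end Hetero

namespace Hetero

section Aux

variable (d : ℕ)

/-- Normalized count of balanced `±1` sequences of length `j`. -/
noncomputable def cntR (j : ℕ) : ℝ :=
  ((Finset.univ.filter (fun u : Fin j → Bool =>
      (∑ i, (if u i then (1:ℤ) else -1)) = 0)).card : ℝ) / 2 ^ j

lemma sum_pm (j : ℕ) (u : Fin j → Bool) :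
    (∑ i, (if u i then (1:ℤ) else -1))
      = 2 * ((Finset.univ.filter (fun i => u i = true)).card : ℤ) - j := by
  have : ∀ i : Fin j, (if u i then (1:ℤ) else -1)
      = 2 * (if u i = true then (1:ℤ) else 0) - 1 := by
    intro i; cases h : u i <;> simp [h]
  rw [Finset.sum_congr rfl (fun i _ => this i)]
  rw [Finset.sum_sub_distrib, ← Finset.mul_sum, Finset.sum_boole, Finset.sum_const]
  simp [Finset.card_univ]

lemma card_trues (N t : ℕ) :
    (Finset.univ.filter (fun u : Fin N → Bool =>
      (Finset.univ.filter (fun i => u i = true)).card = t)).card = N.choose t := by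
  classical
  rw [show N.choose t = ((Finset.univ : Finset (Fin N)).powersetCard t).card by
    rw [Finset.card_powersetCard, Finset.card_univ, Fintype.card_fin]]
  refine Finset.card_bij' (fun u _ => Finset.univ.filter (fun i => u i = true))
    (fun s _ => fun i => decide (i ∈ s)) ?hi ?hj ?li ?ri
  case hi =>
    intro u hu
    simp only [Finset.mem_filter] at hu
    simp [Finset.mem_powersetCard, hu.2]
  case hj =>
    intro s hs
    simp only [Finset.mem_powersetCard] at hs
    simp only [Finset.mem_filter, Finset.mem_univ, true_and]
    rw [← hs.2]; congr 1; ext i; simp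
  case li => intro u hu; funext i; simp
  case ri => intro s hs; ext i; simp

lemma card_balanced_even (m : ℕ) :
    (Finset.univ.filter (fun u : Fin (2*m) → Bool =>
      (∑ i, (if u i then (1:ℤ) else -1)) = 0)).card = Nat.centralBinom m := by
  rw [Nat.centralBinom]
  rw [← card_trues (2*m) m]
  congr 1
  apply Finset.filter_congr
  intro u _
  rw [sum_pm]
  constructor
  · intro hh
    have h2 : 2 * ((Finset.univ.filter (fun i => u i = true)).card : ℤ) = 2 * m := by
      push_cast at hh ⊢; linarith
    have := mul_left_cancel₀ (by norm_num : (2:ℤ) ≠ 0) h2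
    exact_mod_cast this
  · intro hh
    simp only [hh]
    push_cast
    ring

lemma card_balanced_odd (j : ℕ) (hj : ¬ Even j) :
    (Finset.univ.filter (fun u : Fin j → Bool =>
      (∑ i, (if u i then (1:ℤ) else -1)) = 0)).card = 0 := by
  rw [Finset.card_eq_zero]
  rw [Finset.filter_eq_empty_iff]
  intro u _
  rw [sum_pm]
  intro hh
  apply hj
  have h1 : (j : ℤ) = 2 * ((Finset.univ.filter (fun i => u i = true)).card : ℤ) := by linarith
  have h2 : j = 2 * (Finset.univ.filter (fun i => u i = true)).card := by exact_mod_cast h1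
  exact ⟨(Finset.univ.filter (fun i => u i = true)).card, by omega⟩

lemma centralBinom_sq_le (m : ℕ) :
    ((Nat.centralBinom m : ℝ) / 4 ^ m) ^ 2 ≤ 1 / (m + 1) := by
  induction m with
  | zero => simp [Nat.centralBinom]
  | succ m ih =>
    have hrec : ((m:ℝ) + 1) * (Nat.centralBinom (m+1) : ℝ)
        = 2 * (2 * m + 1) * Nat.centralBinom m := by
      exact_mod_cast congrArg (fun k : ℕ => (k : ℝ)) (Nat.succ_mul_centralBinom_succ m)
    set x : ℝ := (Nat.centralBinom m : ℝ) with hx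
    set y : ℝ := (Nat.centralBinom (m+1) : ℝ) with hy
    have hx0 : 0 ≤ x := Nat.cast_nonneg _
    have hy0 : 0 ≤ y := Nat.cast_nonneg _
    have h4 : (0:ℝ) < 4 ^ m := by positivity
    have hm1 : (0:ℝ) < (m:ℝ) + 1 := by positivity
    -- from ih : (x / 4^m)^2 ≤ 1/(m+1), i.e. x^2 * (m+1) ≤ (4^m)^2
    have ih' : x ^ 2 * ((m:ℝ) + 1) ≤ (4 ^ m) ^ 2 := by
      have := ih
      rw [div_pow, div_le_div_iff₀ (by positivity) hm1] at this
      linarith [this]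
    have hsq : (((m:ℝ) + 1)) ^ 2 * y ^ 2 = (2 * (2 * m + 1)) ^ 2 * x ^ 2 := by
      have := congrArg (fun z : ℝ => z ^ 2) hrec
      simp only [mul_pow] at this ⊢
      nlinarith [this]
    rw [div_pow]
    push_cast
    rw [div_le_div_iff₀ (by positivity) (by positivity : (0:ℝ) < (m:ℝ) + 1 + 1)]
    -- goal : y^2 * (m+1+1) ≤ (4^(m+1))^2
    have key : (2 * (2*(m:ℝ) + 1)) ^ 2 * ((m:ℝ) + 2) ≤ 16 * ((m:ℝ)+1) ^ 3 := by nlinarith [sq_nonneg ((m:ℝ))]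
    have h16 : ((4:ℝ) ^ (m+1)) ^ 2 = 16 * (4 ^ m) ^ 2 := by ring
    nlinarith [mul_le_mul_of_nonneg_left ih' (by positivity : (0:ℝ) ≤ (2 * (2*(m:ℝ)+1))^2),
      mul_le_mul_of_nonneg_right key (by positivity : (0:ℝ) ≤ (4^m)^2),
      sq_nonneg y, hm1, mul_pos hm1 (by positivity : (0:ℝ) < ((m:ℝ)+1)^2)]

lemma cntR_nonneg (j : ℕ) : 0 ≤ cntR j := by
  unfold cntR; positivity

lemma cntR_le (j : ℕ) (hj : 1 ≤ j) : cntR j ≤ Real.sqrt (2 / j) := by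
  by_cases he : Even j
  · obtain ⟨m, hm⟩ := he
    have hm' : j = 2 * m := by omega
    subst hm'
    have hmpos : 1 ≤ m := by omega
    unfold cntR
    rw [card_balanced_even]
    have h2 : (2:ℝ) ^ (2*m) = 4 ^ m := by
      rw [pow_mul]; norm_num
    rw [h2]
    have hρ : (Nat.centralBinom m : ℝ) / 4 ^ m ≤ Real.sqrt (1 / (m+1)) := by
      rw [show (1:ℝ)/(m+1) = ((Nat.centralBinom m : ℝ)/4^m)^2 + (1/(m+1) - ((Nat.centralBinom m : ℝ)/4^m)^2) by ring]
      have := centralBinom_sq_le m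
      calc (Nat.centralBinom m : ℝ) / 4 ^ m
          = Real.sqrt (((Nat.centralBinom m : ℝ)/4^m)^2) := by
            rw [Real.sqrt_sq (by positivity)]
        _ ≤ _ := by
            apply Real.sqrt_le_sqrt
            linarith
    refine hρ.trans ?_
    apply Real.sqrt_le_sqrt
    rw [div_le_div_iff₀ (by positivity) (by positivity)]
    push_cast
    nlinarith [hmpos]
  · unfold cntR
    rw [card_balanced_odd j he]
    simp only [Nat.cast_zero, zero_div]
    positivity

lemma tendsto_cntR : Filter.Tendsto cntR Filter.atTop (nhds 0) := by
  have h1 : Filter.Tendsto (fun j : ℕ => Real.sqrt (2 / j)) Filter.atTop (nhds 0) := by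
    rw [show (0:ℝ) = Real.sqrt 0 by simp]
    apply Filter.Tendsto.comp (Real.continuous_sqrt.tendsto 0)
    exact tendsto_const_div_atTop_nhds_zero_nat 2
  apply tendsto_of_tendsto_of_tendsto_of_le_of_le' tendsto_const_nhds h1
  · exact Filter.Eventually.of_forall (fun j => cntR_nonneg j)
  · filter_upwards [Filter.eventually_ge_atTop 1] with j hj
    exact cntR_le j hj

lemma cesaro_cntR :
    Filter.Tendsto (fun n : ℕ => (∑ j ∈ Finset.Icc 1 n, cntR j) / n)
      Filter.atTop (nhds 0) := by
  have h1 : Filter.Tendsto (fun i : ℕ => cntR (1 + i)) Filter.atTop (nhds 0) := by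
    have := tendsto_cntR.comp (Filter.tendsto_add_atTop_nat 1)
    simpa [Function.comp_def, add_comm] using this
  have := h1.cesaro
  convert this using 2 with n
  have : Finset.Icc 1 n = Finset.Ico 1 (n+1) := by
    rw [Finset.Ico_add_one_right_eq_Icc]
  rw [this, Finset.sum_Ico_eq_sum_range]
  simp [div_eq_inv_mul]


/-- Split a step sequence into: coordinate-0 increments up to time `j`; the rest. -/
def splitEquiv (n j : ℕ) (hd : 0 < d) (hj : j ≤ n) :
    (Steps d n) ≃ ((Fin j → Bool) ×
      ((Fin j → {c : Fin d // c ≠ ⟨0, hd⟩} → Bool) ×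
       ({i : Fin n // ¬ (i : ℕ) < j} → Fin d → Bool))) where
  toFun s := (fun i => s (Fin.castLE hj i) ⟨0, hd⟩,
              (fun i c => s (Fin.castLE hj i) c.1, fun i => s i.1))
  invFun p := fun i c =>
    if hi : (i : ℕ) < j then
      (if hc : c = ⟨0, hd⟩ then p.1 ⟨i, hi⟩ else p.2.1 ⟨i, hi⟩ ⟨c, hc⟩)
    else p.2.2 ⟨i, hi⟩ c
  left_inv s := by
    funext i c
    by_cases hi : (i : ℕ) < j
    · by_cases hc : c = ⟨0, hd⟩
      · subst hc; simp [hi, Fin.castLE]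
      · simp [hi, hc, Fin.castLE]
    · simp [hi]
  right_inv p := by
    refine Prod.ext ?_ (Prod.ext ?_ ?_)
    · funext i
      simp [Fin.castLE, i.isLt]
    · funext i c
      simp [Fin.castLE, i.isLt, c.2]
    · funext i
      simp [i.2]

lemma card_steps (n : ℕ) : Fintype.card (Steps d n) = 2 ^ (d * n) := by
  simp [Fintype.card_fun, pow_mul]

lemma sum_proj (n j : ℕ) (hd : 0 < d) (hj : j ≤ n) (g : (Fin j → Bool) → ℝ) :
    ∑ s : Steps d n, g (fun i => s (Fin.castLE hj i) ⟨0, hd⟩)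
      = ((2:ℝ) ^ (d * n) / 2 ^ j) * ∑ u : Fin j → Bool, g u := by
  classical
  have h1 : ∑ s : Steps d n, g (fun i => s (Fin.castLE hj i) ⟨0, hd⟩)
      = ∑ p : ((Fin j → Bool) ×
      ((Fin j → {c : Fin d // c ≠ ⟨0, hd⟩} → Bool) ×
       ({i : Fin n // ¬ (i : ℕ) < j} → Fin d → Bool))), g p.1 :=
    Fintype.sum_equiv (splitEquiv d n j hd hj) _ _ (fun s => rfl)
  rw [h1, Fintype.sum_prod_type]
  have h2 : ∀ u : Fin j → Bool, ∑ _t : ((Fin j → {c : Fin d // c ≠ ⟨0, hd⟩} → Bool) ×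
       ({i : Fin n // ¬ (i : ℕ) < j} → Fin d → Bool)), g u
      = (Fintype.card ((Fin j → {c : Fin d // c ≠ ⟨0, hd⟩} → Bool) ×
       ({i : Fin n // ¬ (i : ℕ) < j} → Fin d → Bool)) : ℝ) * g u := by
    intro u; rw [Finset.sum_const, Finset.card_univ, nsmul_eq_mul]
  rw [Finset.sum_congr rfl (fun u _ => h2 u), ← Finset.mul_sum]
  congr 1
  -- card T = 2^(d*n) / 2^j
  have hcard : 2 ^ (d * n) = 2 ^ j * Fintype.card ((Fin j → {c : Fin d // c ≠ ⟨0, hd⟩} → Bool) ×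
       ({i : Fin n // ¬ (i : ℕ) < j} → Fin d → Bool)) := by
    rw [← card_steps d n, Fintype.card_congr (splitEquiv d n j hd hj), Fintype.card_prod]
    congr 1
    simp [Fintype.card_fun]
  have hcast : (2:ℝ) ^ (d * n) = 2 ^ j * (Fintype.card ((Fin j → {c : Fin d // c ≠ ⟨0, hd⟩} → Bool) ×
       ({i : Fin n // ¬ (i : ℕ) < j} → Fin d → Bool)) : ℝ) := by
    exact_mod_cast congrArg (fun k : ℕ => (k : ℝ)) hcard
  rw [eq_div_iff (by positivity : ((2:ℝ) ^ j) ≠ 0), hcast]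
  ring

set_option maxHeartbeats 1000000 in
lemma sum_pos_zero_le (n j : ℕ) (hd : 0 < d) (hj : j ≤ n) :
    ∑ s : Steps d n, (if pos d 0 s j = 0 then (1:ℝ) else 0)
      ≤ cntR j * 2 ^ (d * n) := by
  classical
  have hpt : ∀ s : Steps d n, (if pos d 0 s j = 0 then (1:ℝ) else 0)
      ≤ (fun u : Fin j → Bool => if (∑ i, (if u i then (1:ℤ) else -1)) = 0 then (1:ℝ) else 0)
        (fun i => s (Fin.castLE hj i) ⟨0, hd⟩) := by
    intro s
    simp only
    by_cases hz : pos d 0 s j = 0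
    · have hc0 : pos d 0 s j ⟨0, hd⟩ = 0 := by rw [hz]; rfl
      have hkey : ∑ i ∈ Finset.range j,
            (if hi : i < n then (if s ⟨i, hi⟩ ⟨0, hd⟩ then (1:ℤ) else -1) else 0)
          = ∑ i : Fin j, (if s (Fin.castLE hj i) ⟨0, hd⟩ then (1:ℤ) else -1) := by
        rw [← Fin.sum_univ_eq_sum_range
          (fun i => if hi : i < n then (if s ⟨i, hi⟩ ⟨0, hd⟩ then (1:ℤ) else -1) else 0) j]
        apply Finset.sum_congr rfl
        intro i _
        rw [dif_pos (lt_of_lt_of_le i.isLt hj)]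
        rfl
      have hs : (∑ i, (if s (Fin.castLE hj i) ⟨0, hd⟩ then (1:ℤ) else -1)) = 0 := by
        simp only [pos, Pi.zero_apply, zero_add] at hc0
        rw [← hkey]
        exact hc0
      rw [if_pos hz, if_pos hs]
    · rw [if_neg hz]
      split <;> norm_num
  have hb := sum_proj d n j hd hj
    (fun u => if (∑ i, (if u i then (1:ℤ) else -1)) = 0 then (1:ℝ) else 0)
  refine le_trans (Finset.sum_le_sum fun s _ => hpt s) ?_
  rw [hb, Finset.sum_boole]
  unfold cntR
  rw [div_mul_eq_mul_div, div_mul_eq_mul_div, mul_comm]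


open scoped Classical in
lemma preimage_pm {Ω : Type*} [MeasurableSpace Ω] (μ : Measure Ω) [IsProbabilityMeasure μ]
    (f : Ω → ℝ) (hmeas : Measurable f) (hval : ∀ a, f a = 1 ∨ f a = -1)
    (hdist : μ {a | f a = 1} = ENNReal.ofReal (1/2))
    (s : Set ℝ) :
    μ (f ⁻¹' s) = (if (1:ℝ) ∈ s then ENNReal.ofReal (1/2) else 0)
      + (if (-1:ℝ) ∈ s then ENNReal.ofReal (1/2) else 0) := by
  classical
  have hset : {a | f a = 1} = f ⁻¹' {1} := rfl
  have hmeas1 : {a | f a = 1} = f ⁻¹' {1} := rfl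
  have hcomp : {a | f a = 1}ᶜ = {a | f a = -1} := by
    ext a
    simp only [Set.mem_compl_iff, Set.mem_setOf_eq]
    rcases hval a with h | h <;>
      simp [h, show ¬(1:ℝ) = -1 by norm_num, show ¬(-1:ℝ) = 1 by norm_num]
  by_cases h1 : (1:ℝ) ∈ s <;> by_cases h2 : (-1:ℝ) ∈ s
  · have : f ⁻¹' s = Set.univ := by
      ext a; simp only [Set.mem_preimage, Set.mem_univ, iff_true]
      rcases hval a with h | h <;> simp [h, h1, h2, show ¬(1:ℝ) = -1 by norm_num, show ¬(-1:ℝ) = 1 by norm_num]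
    rw [this, if_pos h1, if_pos h2]
    rw [measure_univ, ← ENNReal.ofReal_add (by norm_num) (by norm_num)]
    norm_num
  · have : f ⁻¹' s = {a | f a = 1} := by
      ext a; simp only [Set.mem_preimage, Set.mem_setOf_eq]
      rcases hval a with h | h <;> simp [h, h1, h2, show ¬(1:ℝ) = -1 by norm_num, show ¬(-1:ℝ) = 1 by norm_num]
    rw [this, if_pos h1, if_neg h2, hdist, add_zero]
  · have : f ⁻¹' s = {a | f a = -1} := by
      ext a; simp only [Set.mem_preimage, Set.mem_setOf_eq]
      rcases hval a with h | h <;> simp [h, h1, h2, show ¬(1:ℝ) = -1 by norm_num, show ¬(-1:ℝ) = 1 by norm_num]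
    rw [this, if_neg h1, if_pos h2, zero_add, ← hcomp]
    have hms : MeasurableSet {a | f a = 1} := hmeas (measurableSet_singleton 1)
    rw [measure_compl hms (measure_ne_top μ _), hdist, measure_univ]
    rw [show (1:ENNReal) = ENNReal.ofReal 1 by simp]
    rw [← ENNReal.ofReal_sub 1 (by norm_num)]
    norm_num
  · have : f ⁻¹' s = ∅ := by
      ext a; simp only [Set.mem_preimage, Set.mem_empty_iff_false, iff_false]
      rcases hval a with h | h <;> simp [h, h1, h2, show ¬(1:ℝ) = -1 by norm_num, show ¬(-1:ℝ) = 1 by norm_num]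
    rw [this, if_neg h1, if_neg h2]
    simp

lemma lln_pm {Ω : Type*} [MeasurableSpace Ω] (μ : Measure Ω) [IsProbabilityMeasure μ]
    (om : ℤ → Ω → ℝ) (hmeas : ∀ i, Measurable (om i))
    (hval : ∀ i a, om i a = 1 ∨ om i a = -1)
    (hdist : ∀ i, μ {a | om i a = 1} = ENNReal.ofReal (1/2))
    (hpair : ∀ i j : ℤ, i ≠ j → ProbabilityTheory.IndepFun (om i) (om j) μ) :
    ∀ᵐ a ∂μ, Tendsto (fun n : ℕ => (∑ j ∈ Finset.Icc 1 n, om (j:ℤ) a) / n)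
      atTop (nhds 0) := by
  classical
  set X : ℕ → Ω → ℝ := fun i => om ((i:ℤ) + 1) with hX
  have hXmeas : ∀ i, Measurable (X i) := fun i => hmeas _
  have hXval : ∀ i a, X i a = 1 ∨ X i a = -1 := fun i a => hval _ a
  have hint : Integrable (X 0) μ := by
    apply (integrable_const (1:ℝ)).mono' (hXmeas 0).aestronglyMeasurable
    filter_upwards with a
    rcases hXval 0 a with h | h <;> simp [h]
  have hindep : Pairwise (Function.onFun (fun f g => ProbabilityTheory.IndepFun f g μ) X) := by
    intro i j hij
    apply hpair
    intro hh
    apply hij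
    have := add_right_cancel hh
    exact_mod_cast this
  have hident : ∀ i, ProbabilityTheory.IdentDistrib (X i) (X 0) μ μ := by
    intro i
    refine ⟨(hXmeas i).aemeasurable, (hXmeas 0).aemeasurable, ?_⟩
    apply Measure.ext
    intro s hs
    rw [Measure.map_apply (hXmeas i) hs, Measure.map_apply (hXmeas 0) hs]
    rw [preimage_pm μ _ (hXmeas i) (hXval i) (hdist _) s,
      preimage_pm μ _ (hXmeas 0) (hXval 0) (hdist _) s]
  have hmean : (∫ a, X 0 a ∂μ) = 0 := by
    have hs : MeasurableSet {a | X 0 a = 1} := by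
      have : {a | X 0 a = 1} = (X 0) ⁻¹' {1} := rfl
      rw [this]; exact (hXmeas 0) (measurableSet_singleton 1)
    have hrepr : X 0 = fun a =>
        2 * Set.indicator {a | X 0 a = 1} (fun _ => (1:ℝ)) a - 1 := by
      funext a
      rcases hXval 0 a with h | h
      · rw [h, Set.indicator_of_mem (by exact h)]; norm_num
      · rw [h, Set.indicator_of_notMem (by simp [h]; norm_num)]; norm_num
    rw [hrepr]
    rw [integral_sub (((integrable_const (1:ℝ)).indicator hs).const_mul 2) (integrable_const 1)]
    rw [MeasureTheory.integral_const_mul, integral_indicator_const (1:ℝ) hs, measureReal_def, hdist]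
    simp only [integral_const, measureReal_def, measure_univ, ENNReal.toReal_one, one_smul, smul_eq_mul]
    rw [ENNReal.toReal_ofReal (by norm_num)]
    norm_num
  have hlln := ProbabilityTheory.strong_law_ae X hint hindep hident
  rw [hmean] at hlln
  filter_upwards [hlln] with a ha
  have : ∀ n : ℕ, (∑ j ∈ Finset.Icc 1 n, om (j:ℤ) a) / n
      = (n:ℝ)⁻¹ • (∑ i ∈ Finset.range n, X i a) := by
    intro n
    rw [smul_eq_mul, ← div_eq_inv_mul]
    congr 1
    rw [show Finset.Icc 1 n = Finset.Ico 1 (n+1) by rw [Finset.Ico_add_one_right_eq_Icc],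
      Finset.sum_Ico_eq_sum_range]
    simp only [add_tsub_cancel_right]
    apply Finset.sum_congr rfl
    intro i _
    congr 1
    push_cast
    ring
  rw [show (fun n : ℕ => (∑ j ∈ Finset.Icc 1 n, om (j:ℤ) a) / n)
    = fun n : ℕ => (n:ℝ)⁻¹ • (∑ i ∈ Finset.range n, X i a) from funext this]
  exact ha


end Aux


/-- **Step 1 in the proof of Theorem 1.3.** Fix `p ∈ (0,1]`, `λ > 0` and `h < 1` with
`Φ_p(λ,h) = λh` (delocalization).  Then for all `δ, ε ≥ 0` with `ε ≥ δ(1-h)/λ`, also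
`Φ_p(λ+δ, h+ε) = (λ+δ)(h+ε)`.  Here `Φ lam h` denotes the deterministic free energy
`Φ_p(λ,h) = lim (1/n) log Z^n_{0,0}` at interaction parameters `(lam, h)`. -/
theorem delocalization_monotone
    (d : ℕ) (hd : 1 ≤ d) (p lam h : ℝ) (hp : p ∈ Set.Ioc (0:ℝ) 1)
    (hlam : 0 < lam) (hh : h < 1)
    {Ω : Type*} [MeasurableSpace Ω] (μ : MeasureTheory.Measure Ω) [MeasureTheory.IsProbabilityMeasure μ]
    (om et : ℤ → Ω → ℝ)
    (hom_meas : ∀ i, Measurable (om i)) (het_meas : ∀ i, Measurable (et i))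
    (hom_val : ∀ i a, om i a = 1 ∨ om i a = -1)
    (het_val : ∀ i a, et i a = 1 ∨ et i a = -1)
    (hom_dist : ∀ i, μ {a | om i a = 1} = ENNReal.ofReal (1/2))
    (het_dist : ∀ i, μ {a | et i a = 1} = ENNReal.ofReal p)
    (hindep : ProbabilityTheory.iIndepFun
      (Sum.elim om et) μ)
    (Φ : ℝ → ℝ → ℝ)
    (hΦ : ∀ lam h : ℝ, 0 ≤ lam → ∀ᵐ a ∂μ, Tendsto
      (fun n : ℕ => (1 / n : ℝ) * Real.log (Z d lam h (fun i => om i a) (fun i => et i a) 0 0 n))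
      atTop (nhds (Φ lam h)))
    (hdeloc : Φ lam h = lam * h) :
    ∀ δ ε : ℝ, 0 ≤ δ → 0 ≤ ε → δ * (1 - h) / lam ≤ ε →
      Φ (lam + δ) (h + ε) = (lam + δ) * (h + ε) := by
  classical
  intro δ ε hδ hε hle
  have hlam' : (0:ℝ) ≤ lam + δ := by linarith
  have hd0 : 0 < d := hd
  set c : ℝ := lam * ε + δ * h + δ * ε with hc
  set K : ℝ := 2 * (lam + δ) * (1 + |h + ε|) with hK
  have hKpos : 0 ≤ K := by
    have := abs_nonneg (h + ε)
    rw [hK]; positivity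
  have hLE : δ * (1 - h) ≤ lam * ε := by
    rw [div_le_iff₀ hlam] at hle
    linarith
  -- positivity of partition sums
  have hZpos : ∀ (l0 h0 : ℝ) (a : Ω) (n : ℕ),
      0 < Z d l0 h0 (fun i => om i a) (fun i => et i a) 0 0 n := by
    intro l0 h0 a n
    unfold Z
    apply div_pos
    · exact Finset.sum_pos (fun s _ => Real.exp_pos _) Finset.univ_nonempty
    · positivity
  -- notation for the omega sums
  set S : ℕ → Ω → ℝ := fun n a => ∑ j ∈ Finset.Icc 1 n, om ((j:ℕ):ℤ) a with hS
  -- upper comparison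
  have key_upper : ∀ (a : Ω) (n : ℕ),
      Z d (lam+δ) (h+ε) (fun i => om i a) (fun i => et i a) 0 0 n
        ≤ Real.exp (δ * S n a + c * n)
          * Z d lam h (fun i => om i a) (fun i => et i a) 0 0 n := by
    intro a n
    have hterm : ∀ s : Steps d n,
        Real.exp (ham d (lam+δ) (h+ε) (fun i => om i a) (fun i => et i a) 0 0 s)
        ≤ Real.exp (δ * S n a + c * n)
          * Real.exp (ham d lam h (fun i => om i a) (fun i => et i a) 0 0 s) := by
      intro s
      rw [← Real.exp_add]
      apply Real.exp_le_exp.2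
      unfold ham
      simp only [zero_add]
      have hjterm : ∀ j ∈ Finset.Icc 1 n,
          (lam+δ) * (del d (fun i => et i a) (j:ℤ) (pos d 0 s j) * (om (j:ℤ) a + (h+ε)))
          ≤ lam * (del d (fun i => et i a) (j:ℤ) (pos d 0 s j) * (om (j:ℤ) a + h))
            + (δ * om (j:ℤ) a + c) := by
        intro j _
        set D := del d (fun i => et i a) (j:ℤ) (pos d 0 s j) with hD
        set w := om (j:ℤ) a with hw
        have hDv : D = -1 ∨ D = 1 := by
          rw [hD]; unfold del; split
          · exact Or.inl rfl
          · exact Or.inr rfl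
        have hwv : -1 ≤ w ∧ w ≤ 1 := by
          rcases hom_val (j:ℤ) a with hv | hv <;> rw [hw, hv] <;> norm_num
        rcases hDv with hDv | hDv <;> rw [hDv, hc] <;> nlinarith [hwv.1, hwv.2, hδ, hε, hLE]
      have e1 : (lam+δ) * (∑ j ∈ Finset.Icc 1 n,
            del d (fun i => et i a) (j:ℤ) (pos d 0 s j) * (om (j:ℤ) a + (h+ε)))
          = ∑ j ∈ Finset.Icc 1 n,
            (lam+δ) * (del d (fun i => et i a) (j:ℤ) (pos d 0 s j) * (om (j:ℤ) a + (h+ε))) :=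
        Finset.mul_sum _ _ _
      have e2 : lam * (∑ j ∈ Finset.Icc 1 n,
            del d (fun i => et i a) (j:ℤ) (pos d 0 s j) * (om (j:ℤ) a + h))
          = ∑ j ∈ Finset.Icc 1 n,
            lam * (del d (fun i => et i a) (j:ℤ) (pos d 0 s j) * (om (j:ℤ) a + h)) :=
        Finset.mul_sum _ _ _
      have e3 : ∑ j ∈ Finset.Icc 1 n, (δ * om (j:ℤ) a + c) = δ * S n a + c * n := by
        rw [Finset.sum_add_distrib, ← Finset.mul_sum, Finset.sum_const, Nat.card_Icc, hS]
        simp only [add_tsub_cancel_right, nsmul_eq_mul]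
        ring
      rw [e1, e2]
      calc ∑ j ∈ Finset.Icc 1 n,
            (lam+δ) * (del d (fun i => et i a) (j:ℤ) (pos d 0 s j) * (om (j:ℤ) a + (h+ε)))
          ≤ ∑ j ∈ Finset.Icc 1 n,
            (lam * (del d (fun i => et i a) (j:ℤ) (pos d 0 s j) * (om (j:ℤ) a + h))
              + (δ * om (j:ℤ) a + c)) := Finset.sum_le_sum hjterm
        _ = (∑ j ∈ Finset.Icc 1 n,
              lam * (del d (fun i => et i a) (j:ℤ) (pos d 0 s j) * (om (j:ℤ) a + h)))
            + ∑ j ∈ Finset.Icc 1 n, (δ * om (j:ℤ) a + c) := Finset.sum_add_distrib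
        _ = δ * S n a + c * n
            + ∑ j ∈ Finset.Icc 1 n,
              lam * (del d (fun i => et i a) (j:ℤ) (pos d 0 s j) * (om (j:ℤ) a + h)) := by
            rw [e3]; ring
    unfold Z
    rw [← mul_div_assoc, Finset.mul_sum]
    have hnum := Finset.sum_le_sum (fun s (_ : s ∈ Finset.univ) => hterm s)
    exact (div_le_div_iff_of_pos_right (by positivity)).2 hnum
  -- lower (Jensen) comparison
  have key_lower : ∀ (a : Ω) (n : ℕ),
      Real.exp ((lam+δ) * ((h+ε) * n + S n a) - K * (∑ j ∈ Finset.Icc 1 n, cntR j))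
        ≤ Z d (lam+δ) (h+ε) (fun i => om i a) (fun i => et i a) 0 0 n := by
    intro a n
    set N : ℝ := (2:ℝ) ^ (d * n) with hN
    have hNpos : (0:ℝ) < N := by rw [hN]; positivity
    have hcardN : ((Fintype.card (Steps d n) : ℕ) : ℝ) = N := by
      rw [card_steps d n, hN]; push_cast; ring
    -- Jensen's inequality
    have jensen : Real.exp ((∑ s : Steps d n,
          ham d (lam+δ) (h+ε) (fun i => om i a) (fun i => et i a) 0 0 s) / N)
        ≤ Z d (lam+δ) (h+ε) (fun i => om i a) (fun i => et i a) 0 0 n := by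
      have hj := convexOn_exp.map_sum_le (t := (Finset.univ : Finset (Steps d n)))
        (w := fun _ => 1 / N)
        (p := fun s => ham d (lam+δ) (h+ε) (fun i => om i a) (fun i => et i a) 0 0 s)
        (fun _ _ => by positivity)
        (by rw [Finset.sum_const, Finset.card_univ, nsmul_eq_mul, hcardN]
            field_simp)
        (fun _ _ => Set.mem_univ _)
      simp only [smul_eq_mul] at hj
      rw [← Finset.mul_sum, ← Finset.mul_sum] at hj
      unfold Z
      calc Real.exp ((∑ s : Steps d n,
              ham d (lam+δ) (h+ε) (fun i => om i a) (fun i => et i a) 0 0 s) / N)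
          = Real.exp (1 / N * ∑ s : Steps d n,
              ham d (lam+δ) (h+ε) (fun i => om i a) (fun i => et i a) 0 0 s) := by
            rw [one_div, inv_mul_eq_div]
        _ ≤ 1 / N * ∑ s : Steps d n,
              Real.exp (ham d (lam+δ) (h+ε) (fun i => om i a) (fun i => et i a) 0 0 s) := hj
        _ = (∑ s : Steps d n,
              Real.exp (ham d (lam+δ) (h+ε) (fun i => om i a) (fun i => et i a) 0 0 s))
                / 2 ^ (d * n) := by
            rw [one_div, inv_mul_eq_div, hN]
    -- lower bound on the average energy
    have havg : (lam+δ) * ((h+ε) * n + S n a) - K * (∑ j ∈ Finset.Icc 1 n, cntR j)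
        ≤ (∑ s : Steps d n,
            ham d (lam+δ) (h+ε) (fun i => om i a) (fun i => et i a) 0 0 s) / N := by
      rw [le_div_iff₀ hNpos]
      -- pointwise in s
      have hpt : ∀ s : Steps d n,
          (lam+δ) * ((h+ε) * n + S n a)
            - K * (∑ j ∈ Finset.Icc 1 n, (if pos d 0 s j = 0 then (1:ℝ) else 0))
          ≤ ham d (lam+δ) (h+ε) (fun i => om i a) (fun i => et i a) 0 0 s := by
        intro s
        unfold ham
        simp only [zero_add]
        have hjterm : ∀ j ∈ Finset.Icc 1 n,
            (lam+δ) * (om (j:ℤ) a + (h+ε)) - K * (if pos d 0 s j = 0 then (1:ℝ) else 0)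
            ≤ (lam+δ) * (del d (fun i => et i a) (j:ℤ) (pos d 0 s j) * (om (j:ℤ) a + (h+ε))) := by
          intro j _
          have hwv : -1 ≤ om (j:ℤ) a ∧ om (j:ℤ) a ≤ 1 := by
            rcases hom_val (j:ℤ) a with hv | hv <;> rw [hv] <;> norm_num
          have habs : h + ε ≤ |h + ε| := le_abs_self _
          by_cases hz : pos d 0 s j = 0
          · rw [if_pos hz]
            have hDv : del d (fun i => et i a) (j:ℤ) (pos d 0 s j) = -1 ∨
                del d (fun i => et i a) (j:ℤ) (pos d 0 s j) = 1 := by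
              unfold del; split
              · exact Or.inl rfl
              · exact Or.inr rfl
            rcases hDv with hDv | hDv <;> rw [hDv, hK] <;>
              nlinarith [hwv.1, hwv.2, hlam', abs_nonneg (h + ε)]
          · rw [if_neg hz]
            have hDv : del d (fun i => et i a) (j:ℤ) (pos d 0 s j) = 1 := by
              unfold del
              rw [if_neg]
              intro hcon
              exact hz hcon.1
            rw [hDv, one_mul, mul_zero, sub_zero]
        have e2 : ∑ j ∈ Finset.Icc 1 n, ((lam+δ) * (om (j:ℤ) a + (h+ε))
              - K * (if pos d 0 s j = 0 then (1:ℝ) else 0))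
            = (lam+δ) * ((h+ε) * n + S n a)
              - K * (∑ j ∈ Finset.Icc 1 n, (if pos d 0 s j = 0 then (1:ℝ) else 0)) := by
          rw [Finset.sum_sub_distrib, ← Finset.mul_sum, ← Finset.mul_sum,
            Finset.sum_add_distrib, Finset.sum_const, Nat.card_Icc, hS]
          simp only [add_tsub_cancel_right, nsmul_eq_mul]
          ring
        have e1 : (lam+δ) * (∑ j ∈ Finset.Icc 1 n,
              del d (fun i => et i a) (j:ℤ) (pos d 0 s j) * (om (j:ℤ) a + (h+ε)))
            = ∑ j ∈ Finset.Icc 1 n,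
              (lam+δ) * (del d (fun i => et i a) (j:ℤ) (pos d 0 s j) * (om (j:ℤ) a + (h+ε))) :=
          Finset.mul_sum _ _ _
        rw [e1, ← e2]
        exact Finset.sum_le_sum hjterm
      -- sum over s
      have hsum := Finset.sum_le_sum (fun s (_ : s ∈ Finset.univ) => hpt s)
      -- evaluate/bound the left-hand sum
      have hleft : (((lam+δ) * ((h+ε) * n + S n a)
            - K * (∑ j ∈ Finset.Icc 1 n, cntR j)) * N)
          ≤ ∑ s : Steps d n, ((lam+δ) * ((h+ε) * n + S n a)
            - K * (∑ j ∈ Finset.Icc 1 n, (if pos d 0 s j = 0 then (1:ℝ) else 0))) := by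
        rw [Finset.sum_sub_distrib, Finset.sum_const, Finset.card_univ, nsmul_eq_mul, hcardN]
        have hswap : ∑ s : Steps d n, K * (∑ j ∈ Finset.Icc 1 n,
              (if pos d 0 s j = 0 then (1:ℝ) else 0))
            ≤ K * ((∑ j ∈ Finset.Icc 1 n, cntR j) * N) := by
          rw [← Finset.mul_sum]
          apply mul_le_mul_of_nonneg_left ?_ hKpos
          rw [Finset.sum_comm, Finset.sum_mul]
          apply Finset.sum_le_sum
          intro j hj
          rw [Finset.mem_Icc] at hj
          have := sum_pos_zero_le d n j hd0 hj.2
          rw [hN]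
          exact this
        nlinarith [hswap]
      exact le_trans hleft (le_trans hsum (le_of_eq rfl))
    exact le_trans (Real.exp_le_exp.2 havg) jensen
  -- independence of the om's
  have hpair : ∀ i j : ℤ, i ≠ j → ProbabilityTheory.IndepFun (om i) (om j) μ := by
    intro i j hij
    exact hindep.indepFun (show (Sum.inl i : ℤ ⊕ ℤ) ≠ Sum.inl j by simpa using hij)
  have hE3 := lln_pm μ om hom_meas hom_val hom_dist hpair
  obtain ⟨a, ⟨ha1, ha2⟩, ha3⟩ :=
    (((hΦ lam h hlam.le).and (hΦ (lam+δ) (h+ε) hlam')).and hE3).exists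
  -- now work along the realization a
  rw [hdeloc] at ha1
  -- upper bound on Φ(lam+δ, h+ε)
  have hup : Φ (lam+δ) (h+ε) ≤ (lam+δ) * (h+ε) := by
    have hseq : ∀ᶠ n : ℕ in atTop,
        (1/(n:ℝ)) * Real.log (Z d (lam+δ) (h+ε) (fun i => om i a) (fun i => et i a) 0 0 n)
        ≤ δ * (S n a / n) + (c + (1/(n:ℝ)) * Real.log
            (Z d lam h (fun i => om i a) (fun i => et i a) 0 0 n)) := by
      filter_upwards [eventually_ge_atTop 1] with n hn
      have hn0 : (0:ℝ) < n := by exact_mod_cast hn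
      have hlog : Real.log (Z d (lam+δ) (h+ε) (fun i => om i a) (fun i => et i a) 0 0 n)
          ≤ δ * S n a + c * n + Real.log (Z d lam h (fun i => om i a) (fun i => et i a) 0 0 n) := by
        have h1 := (Real.log_le_log_iff (hZpos (lam+δ) (h+ε) a n)
          (mul_pos (Real.exp_pos _) (hZpos lam h a n))).2 (key_upper a n)
        rwa [Real.log_mul (Real.exp_ne_zero _) (ne_of_gt (hZpos lam h a n)),
          Real.log_exp] at h1
      have h2 := mul_le_mul_of_nonneg_left hlog (by positivity : (0:ℝ) ≤ 1/(n:ℝ))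
      calc (1/(n:ℝ)) * Real.log (Z d (lam+δ) (h+ε) (fun i => om i a) (fun i => et i a) 0 0 n)
          ≤ (1/(n:ℝ)) * (δ * S n a + c * n
              + Real.log (Z d lam h (fun i => om i a) (fun i => et i a) 0 0 n)) := h2
        _ = δ * (S n a / n) + (c + (1/(n:ℝ)) * Real.log
              (Z d lam h (fun i => om i a) (fun i => et i a) 0 0 n)) := by
            field_simp
            ring
    have hlim : Tendsto (fun n : ℕ => δ * (S n a / n) + (c + (1/(n:ℝ)) * Real.log
        (Z d lam h (fun i => om i a) (fun i => et i a) 0 0 n))) atTop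
        (nhds (δ * 0 + (c + lam * h))) := (ha3.const_mul δ).add (ha1.const_add c)
    have := le_of_tendsto_of_tendsto ha2 hlim hseq
    calc Φ (lam+δ) (h+ε) ≤ δ * 0 + (c + lam * h) := this
      _ = (lam+δ) * (h+ε) := by rw [hc]; ring
  -- lower bound on Φ(lam+δ, h+ε)
  have hlo : (lam+δ) * (h+ε) ≤ Φ (lam+δ) (h+ε) := by
    have hseq : ∀ᶠ n : ℕ in atTop,
        ((lam+δ) * (h+ε) + (lam+δ) * (S n a / n))
            - K * ((∑ j ∈ Finset.Icc 1 n, cntR j) / n)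
        ≤ (1/(n:ℝ)) * Real.log (Z d (lam+δ) (h+ε) (fun i => om i a) (fun i => et i a) 0 0 n) := by
      filter_upwards [eventually_ge_atTop 1] with n hn
      have hn0 : (0:ℝ) < n := by exact_mod_cast hn
      have hlog : (lam+δ) * ((h+ε) * n + S n a) - K * (∑ j ∈ Finset.Icc 1 n, cntR j)
          ≤ Real.log (Z d (lam+δ) (h+ε) (fun i => om i a) (fun i => et i a) 0 0 n) :=
        (Real.le_log_iff_exp_le (hZpos (lam+δ) (h+ε) a n)).2 (key_lower a n)
      have h2 := mul_le_mul_of_nonneg_left hlog (by positivity : (0:ℝ) ≤ 1/(n:ℝ))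
      calc ((lam+δ) * (h+ε) + (lam+δ) * (S n a / n))
              - K * ((∑ j ∈ Finset.Icc 1 n, cntR j) / n)
          = (1/(n:ℝ)) * ((lam+δ) * ((h+ε) * n + S n a)
              - K * (∑ j ∈ Finset.Icc 1 n, cntR j)) := by
            field_simp
        _ ≤ _ := h2
    have hlim : Tendsto (fun n : ℕ => ((lam+δ) * (h+ε) + (lam+δ) * (S n a / n))
        - K * ((∑ j ∈ Finset.Icc 1 n, cntR j) / n)) atTop
        (nhds (((lam+δ) * (h+ε) + (lam+δ) * 0) - K * 0)) :=
      ((tendsto_const_nhds.add (ha3.const_mul (lam+δ))).sub (cesaro_cntR.const_mul K))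
    have := le_of_tendsto_of_tendsto hlim ha2 hseq
    calc (lam+δ) * (h+ε) = ((lam+δ) * (h+ε) + (lam+δ) * 0) - K * 0 := by ring
      _ ≤ Φ (lam+δ) (h+ε) := this
  linarith



end Hetero
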